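/- Failure of relative monotonicity for hidden choice: for every p ∈ (0,1) there exist finite sets X and Y and channels C₁ : X×Y → ℝ and C₂ : X×Y → ℝ such that V_g[π,C₁] ≤ V_g[π,C₂] for every prior π on X and every gain function g, and yet there exist a prior π', a gain function g', and a channel C compatible with C₁ and C₂ such that V_{g'}[π', C₁ ⊕_p C] > V_{g'}[π', C₂ ⊕_p C]. -/

import Mathlib

open Finset

/-- A channel with input set `X` and output set `Y`: entries are nonnegative
and each row sums to `1`. -/
def IsChannel {X Y : Type*} [Fintype Y] (C : X → Y → ℝ) : Prop :=
  (∀ x y, 0 ≤ C x y) ∧ ∀ x, ∑ y, C x y = 1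

/-- A channel with input set `X` whose output set is the finset `S` of a common
ambient type `Ω`: entries are nonnegative, each row sums to `1` over `S`, and
entries vanish outside `S`. -/
def IsChannelOn {X Ω : Type*} (S : Finset Ω) (C : X → Ω → ℝ) : Prop :=
  (∀ x y, 0 ≤ C x y) ∧ (∀ x, ∑ y ∈ S, C x y = 1) ∧ ∀ x y, y ∉ S → C x y = 0

/-- Parallel composition `C₁ ∥ C₂`. -/
def par {X Y₁ Y₂ : Type*} (C₁ : X → Y₁ → ℝ) (C₂ : X → Y₂ → ℝ) : X → Y₁ × Y₂ → ℝ :=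
  fun x y => C₁ x y.1 * C₂ x y.2

/-- Visible choice `C₁ ⊞_p C₂`, on the disjoint union of the output sets. -/
def vis {X Y₁ Y₂ : Type*} (p : ℝ) (C₁ : X → Y₁ → ℝ) (C₂ : X → Y₂ → ℝ) : X → Y₁ ⊕ Y₂ → ℝ :=
  fun x => Sum.elim (fun y => p * C₁ x y) (fun y => (1 - p) * C₂ x y)

/-- Hidden choice `C₁ ⊕_p C₂` for channels whose output sets lie in a common
ambient type (pointwise convex combination; this agrees with the case analysis
on `Y₁ ∩ Y₂`, `Y₁ \ Y₂`, `Y₂ \ Y₁` since channels vanish outside their output sets). -/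
def hid {X Ω : Type*} (p : ℝ) (C₁ C₂ : X → Ω → ℝ) : X → Ω → ℝ :=
  fun x y => p * C₁ x y + (1 - p) * C₂ x y

/-- Equality up to a permutation of the output set, `C₁ ≐ C₂`. -/
def PermEq {X Y₁ Y₂ : Type*} (C₁ : X → Y₁ → ℝ) (C₂ : X → Y₂ → ℝ) : Prop :=
  ∃ ψ : Y₁ ≃ Y₂, ∀ x y, C₁ x y = C₂ x (ψ y)

/-- Cascading `CD` of channels. -/
def cascade {X Y Z : Type*} [Fintype Y] (C : X → Y → ℝ) (D : Y → Z → ℝ) : X → Z → ℝ :=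
  fun x z => ∑ y, C x y * D y z

/-- `Refines C₁ C₂` (written `C₁ ⊑ C₂`): there is a channel `D` with `C₁D = C₂`. -/
def Refines {X Y₁ Y₂ : Type*} [Fintype Y₁] [Fintype Y₂] (C₁ : X → Y₁ → ℝ)
    (C₂ : X → Y₂ → ℝ) : Prop :=
  ∃ D : Y₁ → Y₂ → ℝ, IsChannel D ∧ cascade C₁ D = C₂

/-- Equivalence of channels: mutual refinement. -/
def EquivCh {X Y₁ Y₂ : Type*} [Fintype Y₁] [Fintype Y₂] (C₁ : X → Y₁ → ℝ)
    (C₂ : X → Y₂ → ℝ) : Prop :=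
  Refines C₁ C₂ ∧ Refines C₂ C₁

/-- A prior: a probability distribution on the finite input set `X`. -/
def IsPrior {X : Type*} [Fintype X] (π : X → ℝ) : Prop :=
  (∀ x, 0 ≤ π x) ∧ ∑ x, π x = 1

/-- A gain function `g : W × X → [0,1]`. -/
def IsGain {W X : Type*} (g : W → X → ℝ) : Prop :=
  ∀ w x, 0 ≤ g w x ∧ g w x ≤ 1

/-- Posterior g-vulnerability `V_g[π, C]`. -/
noncomputable def postV {W X Y : Type*} [Fintype W] [Nonempty W] [Fintype X] [Fintype Y]
    (π : X → ℝ) (g : W → X → ℝ) (C : X → Y → ℝ) : ℝ :=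
  ∑ y, univ.sup' univ_nonempty fun w => ∑ x, C x y * π x * g w x


lemma sup'_const_mul {W : Type*} (s : Finset W) (hs : s.Nonempty) (c : ℝ) (hc : 0 ≤ c)
    (f : W → ℝ) : s.sup' hs (fun w => c * f w) = c * s.sup' hs f := by
  apply le_antisymm
  · apply Finset.sup'_le
    intro w hw
    exact mul_le_mul_of_nonneg_left (Finset.le_sup' f hw) hc
  · obtain ⟨w, hw, hEq⟩ := Finset.exists_mem_eq_sup' hs f
    rw [hEq]
    exact Finset.le_sup' (fun w => c * f w) hw

lemma sup'_fin2 (f : Fin 2 → ℝ) :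
    (univ : Finset (Fin 2)).sup' univ_nonempty f = max (f 0) (f 1) := by
  have h : (univ : Finset (Fin 2)) = {0, 1} := by decide
  rw [Finset.sup'_congr univ_nonempty h (fun a _ => rfl)]
  rw [Finset.sup'_insert, Finset.sup'_singleton]
  exact Finset.singleton_nonempty _

/-- Failure of relative monotonicity for hidden choice: finite sets are
represented by `Fin nX` and `Fin nY`, and finite nonempty action sets by
`Fin (k + 1)`. -/
theorem relative_monotonicity_fails_hidden_choice (p : ℝ) (hp0 : 0 < p) (hp1 : p < 1) :
    ∃ (nX nY : ℕ) (C₁ C₂ : Fin nX → Fin nY → ℝ),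
      IsChannel C₁ ∧ IsChannel C₂ ∧
      (∀ (W : Type) [Fintype W] [Nonempty W] (π : Fin nX → ℝ) (g : W → Fin nX → ℝ),
        IsPrior π → IsGain g → postV π g C₁ ≤ postV π g C₂) ∧
      ∃ (k : ℕ) (π' : Fin nX → ℝ) (g' : Fin (k + 1) → Fin nX → ℝ)
          (C : Fin nX → Fin nY → ℝ),
        IsPrior π' ∧ IsGain g' ∧ IsChannel C ∧
          postV π' g' (hid p C₂ C) < postV π' g' (hid p C₁ C) := by
  classical
  refine ⟨2, 2, (fun _ _ => (1:ℝ)/2),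
    (fun x y => if x = y then (3 - p)/4 else (1 + p)/4), ?_, ?_, ?_, ?_⟩
  · refine ⟨fun x y => by norm_num, fun x => ?_⟩
    rw [Fin.sum_univ_two]
    norm_num
  · constructor
    · intro x y
      dsimp only
      split <;> nlinarith
    · intro x
      rw [Fin.sum_univ_two]
      fin_cases x <;> simp <;> ring
  · intro W _ _ π g hπ hg
    set S : W → ℝ := fun w => ∑ x, π x * g w x with hS
    have hterm : ∀ (w : W), (∑ x : Fin 2, (1:ℝ)/2 * π x * g w x) = 1/2 * S w := by
      intro w
      rw [hS, Finset.mul_sum]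
      exact Finset.sum_congr rfl fun x _ => by ring
    have h1 : postV π g (fun (_ : Fin 2) (_ : Fin 2) => (1:ℝ)/2)
        = (univ : Finset W).sup' univ_nonempty S := by
      unfold postV
      dsimp only
      simp only [hterm]
      rw [sup'_const_mul _ _ ((1:ℝ)/2) (by norm_num) S, Fin.sum_univ_two]
      ring
    rw [h1]
    obtain ⟨w₀, hw₀, hEq⟩ := Finset.exists_mem_eq_sup' (univ_nonempty (α := W)) S
    rw [hEq]
    have key : S w₀ = ∑ y : Fin 2, ∑ x : Fin 2,
        (if x = y then (3 - p)/4 else (1 + p)/4) * π x * g w₀ x := by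
      rw [hS, Finset.sum_comm]
      refine Finset.sum_congr rfl fun x _ => ?_
      rw [Fin.sum_univ_two]
      fin_cases x <;> simp <;> ring
    rw [key]
    unfold postV
    dsimp only
    apply Finset.sum_le_sum
    intro y _
    exact Finset.le_sup' (fun w => ∑ x : Fin 2,
      (if x = y then (3 - p)/4 else (1 + p)/4) * π x * g w x) hw₀
  · refine ⟨1, (fun _ => (1:ℝ)/2), (fun w x => if w = x then 1 else 0),
      (fun x y => if x = y then (2 - p)/4 else (2 + p)/4), ?_, ?_, ?_, ?_⟩
    · refine ⟨fun x => by norm_num, ?_⟩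
      rw [Fin.sum_univ_two]
      norm_num
    · intro w x
      dsimp only
      split <;> norm_num
    · constructor
      · intro x y
        dsimp only
        split <;> nlinarith
      · intro x
        rw [Fin.sum_univ_two]
        fin_cases x <;> simp <;> ring
    · unfold postV hid
      rw [Fin.sum_univ_two, Fin.sum_univ_two, sup'_fin2, sup'_fin2, sup'_fin2, sup'_fin2]
      simp only [Fin.sum_univ_two]
      norm_num [Fin.ext_iff]
      have hA : (p*((3-p)/4)+(1-p)*((2-p)/4))*(1/2) = (1:ℝ)/4 := by ring
      have hB : (p*((1+p)/4)+(1-p)*((2+p)/4))*(1/2) = (1:ℝ)/4 := by ring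
      rw [hA, hB, max_self]
      refine lt_of_lt_of_le ?_ (add_le_add (le_max_right _ _) (le_max_left _ _))
      nlinarith
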